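/- arXiv:2411.04018 — 3 statements merged into one kernel-verified Lean document; each statement's English description precedes it below -/
import Mathlib

section
/- Let μ > 0, D ≥ 0, ζ ≥ 0, R > 0, and let φ : [0,∞) → [0,∞) be a differentiable (absolutely continuous) function satisfying φ′(t) ≤ −2μ·φ(t) − 2D·(R^ζ − φ(t)^{ζ/2})·ψ(t) for almost all t ≥ 0, where ψ(t) ≥ 0. If φ(0) ≤ R², then φ(t) ≤ e^{−2μt}·φ(0) for all t ≥ 0; in particular φ(t) ≤ R² for all t ≥ 0. -/
open Real

theorem stmt2 (μ D ζ R : ℝ) (φ φ' ψ : ℝ → ℝ)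
    (hμ : 0 < μ) (hD : 0 ≤ D) (hζ : 0 ≤ ζ) (hR : 0 < R)
    (hφpos : ∀ t : ℝ, 0 ≤ t → 0 ≤ φ t)
    (hψ : ∀ t : ℝ, 0 ≤ t → 0 ≤ ψ t)
    (hderiv : ∀ t : ℝ, 0 ≤ t → HasDerivAt φ (φ' t) t)
    (hineq : ∀ t : ℝ, 0 ≤ t →
      φ' t ≤ -2 * μ * φ t - 2 * D * (R ^ ζ - (φ t) ^ (ζ / 2)) * ψ t)
    (h0 : φ 0 ≤ R ^ 2) :
    ∀ t : ℝ, 0 ≤ t → φ t ≤ Real.exp (-2 * μ * t) * φ 0 ∧ φ t ≤ R ^ 2 := by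
  have hR2 : (0:ℝ) < R ^ 2 := by positivity
  have hRpow : ((R:ℝ) ^ 2) ^ (ζ / 2) = R ^ ζ := by
    rw [← Real.rpow_natCast R 2, ← Real.rpow_mul hR.le]
    norm_num
    congr 1
    ring
  have hpow : ∀ t, 0 ≤ t → φ t ≤ R ^ 2 → φ t ^ (ζ / 2) ≤ R ^ ζ := by
    intro t ht hle
    have h1 : φ t ^ (ζ/2) ≤ (R ^ 2) ^ (ζ/2) :=
      Real.rpow_le_rpow (hφpos t ht) hle (by positivity)
    rwa [hRpow] at h1
  -- Claim A: invariance of the ball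
  have hA : ∀ t, 0 ≤ t → φ t ≤ R ^ 2 := by
    by_contra h
    push_neg at h
    obtain ⟨t₁, ht₁, ht₁'⟩ := h
    set T : Set ℝ := {s | 0 ≤ s ∧ R ^ 2 < φ s} with hTdef
    have hTne : T.Nonempty := ⟨t₁, ht₁, ht₁'⟩
    have hTbdd : BddBelow T := ⟨0, fun s hs => hs.1⟩
    set u := sInf T with hudef
    have hu0 : 0 ≤ u := le_csInf hTne fun s hs => hs.1
    have hcont : ContinuousAt φ u := (hderiv u hu0).continuousAt
    have huT : u ∉ T := by
      intro huT
      have hφu : R ^ 2 < φ u := huT.2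
      have hev : ∀ᶠ s in nhds u, R ^ 2 < φ s := hcont.eventually (eventually_gt_nhds hφu)
      rcases eq_or_lt_of_le hu0 with h0u | h0u
      · have : R ^ 2 < φ 0 := by rwa [← h0u] at hφu
        linarith
      · have hev2 : ∀ᶠ s in nhdsWithin u (Set.Iio u), R ^ 2 < φ s ∧ 0 < s := by
          apply Filter.Eventually.filter_mono nhdsWithin_le_nhds
          exact hev.and (eventually_gt_nhds h0u)
        obtain ⟨s, hs, hsu⟩ := (hev2.and self_mem_nhdsWithin).exists
        have : s ∈ T := ⟨hs.2.le, hs.1⟩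
        have := csInf_le hTbdd this
        rw [← hudef] at this
        exact absurd this (not_le.mpr hsu)
    have hule : φ u ≤ R ^ 2 := by
      by_contra hc
      exact huT ⟨hu0, lt_of_not_ge hc⟩
    have huge : R ^ 2 ≤ φ u := by
      have hcl : u ∈ closure T := csInf_mem_closure hTne hTbdd
      by_contra hc
      push_neg at hc
      have hev : ∀ᶠ s in nhds u, φ s < R ^ 2 := hcont.eventually (eventually_lt_nhds hc)
      obtain ⟨s, hs1, hs2⟩ := ((mem_closure_iff_frequently.mp hcl).and_eventually hev).exists
      exact absurd hs2 (not_lt.mpr hs1.2.le)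
    have hφu : φ u = R ^ 2 := le_antisymm hule huge
    -- derivative at u is strictly negative
    have hdu : φ' u < 0 := by
      have := hineq u hu0
      rw [hφu, hRpow] at this
      simp at this
      have hpos : 0 < 2 * μ * R ^ 2 := by positivity
      linarith
    -- hence φ < R^2 just to the right of u
    have hslope : Filter.Tendsto (slope φ u) (nhdsWithin u {u}ᶜ) (nhds (φ' u)) :=
      hasDerivAt_iff_tendsto_slope.mp (hderiv u hu0)
    have hev : ∀ᶠ s in nhdsWithin u {u}ᶜ, slope φ u s < 0 :=
      hslope.eventually (eventually_lt_nhds hdu)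
    have hev' : ∀ᶠ s in nhdsWithin u (Set.Ioi u), s ∉ T := by
      have hmono : nhdsWithin u (Set.Ioi u) ≤ nhdsWithin u {u}ᶜ :=
        nhdsWithin_mono u (fun s hs => Set.mem_compl_singleton_iff.mpr (ne_of_gt hs))
      filter_upwards [hev.filter_mono hmono, self_mem_nhdsWithin] with s hs hsu
      intro hsT
      have hsu' : (0:ℝ) < s - u := sub_pos.mpr hsu
      have : φ s - φ u < 0 := by
        have := hs
        rw [slope_def_field] at this
        have := (div_neg_iff.mp this)
        rcases this with ⟨h1, h2⟩ | ⟨h1, h2⟩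
        · linarith
        · linarith [hsu']
      rw [hφu] at this
      exact absurd hsT.2 (not_lt.mpr (by linarith))
    obtain ⟨b, hb, hIoo⟩ := mem_nhdsGT_iff_exists_Ioo_subset.mp hev'
    have hub : sInf T < b := lt_of_eq_of_lt hudef.symm hb
    obtain ⟨a, haT, hab⟩ := exists_lt_of_csInf_lt hTne hub
    have hua : u ≤ a := csInf_le hTbdd haT
    have hua' : u < a := lt_of_le_of_ne hua (fun h => huT (h ▸ haT))
    exact (hIoo ⟨hua', hab⟩) haT
  -- Claim B: Grönwall via antitonicity of F t = φ t * exp (2 μ t)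
  set F : ℝ → ℝ := fun t => φ t * Real.exp (2 * μ * t) with hFdef
  have hFd : ∀ t, 0 ≤ t →
      HasDerivAt F ((φ' t + 2 * μ * φ t) * Real.exp (2 * μ * t)) t := by
    intro t ht
    have he : HasDerivAt (fun s => Real.exp (2 * μ * s))
        (Real.exp (2 * μ * t) * (2 * μ * 1)) t :=
      ((hasDerivAt_id t).const_mul (2 * μ)).exp
    have := (hderiv t ht).mul he
    exact this.congr_deriv (by ring)
  have hderivF : ∀ t, 0 < t → deriv F t ≤ 0 := by
    intro t ht
    rw [(hFd t ht.le).deriv]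
    have hnn : 0 ≤ 2 * D * (R ^ ζ - φ t ^ (ζ / 2)) * ψ t := by
      apply mul_nonneg (mul_nonneg (by linarith) _) (hψ t ht.le)
      have := hpow t ht.le (hA t ht.le)
      linarith
    have h1 : φ' t + 2 * μ * φ t ≤ 0 := by
      have := hineq t ht.le
      linarith
    exact mul_nonpos_of_nonpos_of_nonneg h1 (Real.exp_pos _).le
  have hAnti : AntitoneOn F (Set.Ici 0) := by
    apply antitoneOn_of_deriv_nonpos (convex_Ici 0)
    · exact fun t ht => (hFd t ht).continuousAt.continuousWithinAt
    · intro t ht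
      rw [interior_Ici] at ht
      exact (hFd t (le_of_lt ht)).differentiableAt.differentiableWithinAt
    · intro t ht
      rw [interior_Ici] at ht
      exact hderivF t ht
  intro t ht
  have hF : F t ≤ F 0 := hAnti Set.self_mem_Ici ht ht
  have hF0 : F 0 = φ 0 := by simp [hFdef]
  have hFt : φ t * Real.exp (2 * μ * t) ≤ φ 0 := by
    rw [← hF0]; exact hF
  have hmain : φ t ≤ Real.exp (-2 * μ * t) * φ 0 := by
    have h1 : φ t ≤ φ 0 / Real.exp (2 * μ * t) :=
      (le_div_iff₀ (Real.exp_pos _)).mpr hFt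
    have h2 : Real.exp (-2 * μ * t) * φ 0 = φ 0 / Real.exp (2 * μ * t) := by
      rw [show (-2 * μ * t) = -(2 * μ * t) by ring, Real.exp_neg]
      field_simp
    rw [h2]
    exact h1
  exact ⟨hmain, hA t ht⟩
end

section
/- Let Ω ⊂ ℝ^d (d ≤ 3) be bounded and let y_r ∈ L^∞(Ω) with ‖y_r‖_∞ ≤ C_r and ‖∇y_r‖_∞ ≤ C_r. Define N_f(v) = f(y_r + v) − f(y_r) with f(s) = 4τ(s³ − s). Then ∇(N_f(v)) = 4τ[(3v² + 6y_r v + 3y_r² − 1)∇v + (3v² + 6y_r v)∇y_r] pointwise, and consequently −∫_Ω ∇(N_f(v))·∇v dx ≤ 4τ‖∇v‖²_{L²} + 12τ C_r ‖v‖²_{L⁴}‖∇v‖_{L²} + 24τ C_r² ‖v‖_{L²}‖∇v‖_{L²}. -/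
open MeasureTheory
open scoped ENNReal

set_option maxHeartbeats 1000000 in
theorem stmt7 (d : ℕ) (hd : 1 ≤ d ∧ d ≤ 3)
    (Ω : Set (EuclideanSpace ℝ (Fin d))) (hΩ : MeasurableSet Ω)
    (hΩb : Bornology.IsBounded Ω)
    (τ Cr : ℝ) (hτ : 0 < τ) (hCr : 0 ≤ Cr)
    (v yr : EuclideanSpace ℝ (Fin d) → ℝ)
    (hv : Differentiable ℝ v) (hyr : Differentiable ℝ yr)
    (hyrb : ∀ x, |yr x| ≤ Cr) (hgyrb : ∀ x, ‖gradient yr x‖ ≤ Cr)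
    (f : ℝ → ℝ) (hf : ∀ s : ℝ, f s = 4 * τ * (s ^ 3 - s))
    (Nf : EuclideanSpace ℝ (Fin d) → ℝ) (hNf : ∀ x, Nf x = f (yr x + v x) - f (yr x))
    (hint1 : IntegrableOn (fun x => (inner ℝ (gradient Nf x) (gradient v x) : ℝ)) Ω)
    (hint2 : IntegrableOn (fun x => ‖gradient v x‖ ^ 2) Ω)
    (hint3 : IntegrableOn (fun x => (v x) ^ 4) Ω)
    (hint4 : IntegrableOn (fun x => (v x) ^ 2) Ω) :
    (∀ x, gradient Nf x =
        (4 * τ * (3 * (v x) ^ 2 + 6 * yr x * v x + 3 * (yr x) ^ 2 - 1)) • gradient v x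
          + (4 * τ * (3 * (v x) ^ 2 + 6 * yr x * v x)) • gradient yr x) ∧
    (-∫ x in Ω, (inner ℝ (gradient Nf x) (gradient v x) : ℝ))
      ≤ 4 * τ * (∫ x in Ω, ‖gradient v x‖ ^ 2)
        + 12 * τ * Cr * (∫ x in Ω, (v x) ^ 4) ^ ((1 : ℝ) / 2)
            * (∫ x in Ω, ‖gradient v x‖ ^ 2) ^ ((1 : ℝ) / 2)
        + 24 * τ * Cr ^ 2 * (∫ x in Ω, (v x) ^ 2) ^ ((1 : ℝ) / 2)
            * (∫ x in Ω, ‖gradient v x‖ ^ 2) ^ ((1 : ℝ) / 2) := by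
  classical
  -- derivative of f as a one-variable function
  have hfd : ∀ s : ℝ, HasDerivAt f (4 * τ * (3 * s ^ 2 - 1)) s := by
    intro s
    have hf' : f = fun s : ℝ => 4 * τ * (s ^ 3 - s) := funext hf
    rw [hf']
    have h1 : HasDerivAt (fun s : ℝ => s ^ 3 - s) (3 * s ^ 2 - 1) s := by
      exact ((hasDerivAt_pow 3 s).sub (hasDerivAt_id' s)).congr_deriv (by norm_num)
    exact h1.const_mul (4 * τ)
  -- the gradient formula
  have hgrad : ∀ x, gradient Nf x =
      (4 * τ * (3 * (v x) ^ 2 + 6 * yr x * v x + 3 * (yr x) ^ 2 - 1)) • gradient v x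
        + (4 * τ * (3 * (v x) ^ 2 + 6 * yr x * v x)) • gradient yr x := by
    intro x
    have hvf : HasFDerivAt v (InnerProductSpace.toDual ℝ (EuclideanSpace ℝ (Fin d)) (gradient v x)) x :=
      (hv x).hasGradientAt.hasFDerivAt
    have hyf : HasFDerivAt yr (InnerProductSpace.toDual ℝ (EuclideanSpace ℝ (Fin d)) (gradient yr x)) x :=
      (hyr x).hasGradientAt.hasFDerivAt
    set Dv := InnerProductSpace.toDual ℝ (EuclideanSpace ℝ (Fin d)) (gradient v x) with hDv
    set Dy := InnerProductSpace.toDual ℝ (EuclideanSpace ℝ (Fin d)) (gradient yr x) with hDy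
    have hsum : HasFDerivAt (fun y => yr y + v y) (Dy + Dv) x := hyf.add hvf
    have h1 : HasFDerivAt (fun y => f (yr y + v y))
        ((4 * τ * (3 * (yr x + v x) ^ 2 - 1)) • (Dy + Dv)) x := by
      simpa [Function.comp_def] using
        (hfd (yr x + v x)).comp_hasFDerivAt x hsum
    have h2 : HasFDerivAt (fun y => f (yr y))
        ((4 * τ * (3 * (yr x) ^ 2 - 1)) • Dy) x := by
      simpa [Function.comp_def] using (hfd (yr x)).comp_hasFDerivAt x hyf
    have hNfeq : (fun y => f (yr y + v y) - f (yr y)) = Nf := by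
      funext y; rw [hNf]
    have hF : HasFDerivAt Nf
        ((4 * τ * (3 * (yr x + v x) ^ 2 - 1)) • (Dy + Dv)
          - (4 * τ * (3 * (yr x) ^ 2 - 1)) • Dy) x := by
      rw [← hNfeq]; exact h1.sub h2
    have hfd' : fderiv ℝ Nf x =
        (4 * τ * (3 * (yr x + v x) ^ 2 - 1)) • (Dy + Dv)
          - (4 * τ * (3 * (yr x) ^ 2 - 1)) • Dy := hF.fderiv
    rw [gradient, hfd', hDv, hDy]
    rw [map_sub, _root_.map_smul, _root_.map_smul, map_add,
      LinearIsometryEquiv.symm_apply_apply, LinearIsometryEquiv.symm_apply_apply]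
    set gv := gradient v x
    set gy := gradient yr x
    rw [smul_add]
    module
  refine ⟨hgrad, ?_⟩
  -- notation
  set μ := (volume : Measure (EuclideanSpace ℝ (Fin d))).restrict Ω with hμ
  set g : EuclideanSpace ℝ (Fin d) → ℝ := fun x => ‖gradient v x‖ with hg
  have hI1 : Integrable (fun x => (inner ℝ (gradient Nf x) (gradient v x) : ℝ)) μ := hint1
  have hI2 : Integrable (fun x => g x ^ 2) μ := hint2
  have hI3 : Integrable (fun x => (v x) ^ 4) μ := hint3
  have hI4 : Integrable (fun x => (v x) ^ 2) μ := hint4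
  -- pointwise bound
  have hpt : ∀ x, -(inner ℝ (gradient Nf x) (gradient v x) : ℝ)
      ≤ 4 * τ * g x ^ 2 + 12 * τ * Cr * ((v x) ^ 2 * g x)
        + 24 * τ * Cr ^ 2 * (|v x| * g x) := by
    intro x
    rw [hgrad x]
    set a := v x
    set b := yr x
    set gv := gradient v x
    set gy := gradient yr x
    have hip : |(inner ℝ gy gv : ℝ)| ≤ Cr * ‖gv‖ :=
      (abs_real_inner_le_norm gy gv).trans
        (mul_le_mul_of_nonneg_right (hgyrb x) (norm_nonneg _))
    rw [inner_add_left, real_inner_smul_left, real_inner_smul_left,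
      real_inner_self_eq_norm_sq]
    set ip := (inner ℝ gy gv : ℝ) with hipdef
    have hn : (0 : ℝ) ≤ ‖gv‖ := norm_nonneg _
    have h1 : -(4 * τ * (3 * a ^ 2 + 6 * b * a + 3 * b ^ 2 - 1) * ‖gv‖ ^ 2)
        ≤ 4 * τ * ‖gv‖ ^ 2 := by
      nlinarith [mul_nonneg (mul_nonneg hτ.le (sq_nonneg (a + b))) (sq_nonneg ‖gv‖)]
    have h2 : -(4 * τ * (3 * a ^ 2 + 6 * b * a) * ip)
        ≤ 12 * τ * Cr * (a ^ 2 * ‖gv‖) + 24 * τ * Cr ^ 2 * (|a| * ‖gv‖) := by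
      have habs : -(4 * τ * (3 * a ^ 2 + 6 * b * a) * ip)
          ≤ |4 * τ * (3 * a ^ 2 + 6 * b * a)| * |ip| := by
        calc -(4 * τ * (3 * a ^ 2 + 6 * b * a) * ip)
            ≤ |4 * τ * (3 * a ^ 2 + 6 * b * a) * ip| := neg_le_abs _
          _ = |4 * τ * (3 * a ^ 2 + 6 * b * a)| * |ip| := abs_mul _ _
      have hc : |4 * τ * (3 * a ^ 2 + 6 * b * a)| ≤ 4 * τ * (3 * a ^ 2 + 6 * Cr * |a|) := by
        rw [abs_mul, abs_of_nonneg (by linarith : (0:ℝ) ≤ 4 * τ)]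
        have : |3 * a ^ 2 + 6 * b * a| ≤ 3 * a ^ 2 + 6 * Cr * |a| := by
          calc |3 * a ^ 2 + 6 * b * a| ≤ |3 * a ^ 2| + |6 * b * a| := abs_add_le _ _
            _ = 3 * a ^ 2 + 6 * (|b| * |a|) := by
                rw [abs_of_nonneg (by positivity : (0:ℝ) ≤ 3 * a ^ 2)]
                rw [show (6:ℝ) * b * a = 6 * (b * a) by ring, abs_mul, abs_mul,
                  abs_of_nonneg (by norm_num : (0:ℝ) ≤ 6)]
            _ ≤ 3 * a ^ 2 + 6 * (Cr * |a|) := by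
                have := hyrb x
                nlinarith [abs_nonneg a]
            _ = 3 * a ^ 2 + 6 * Cr * |a| := by ring
        nlinarith [hτ.le]
      calc -(4 * τ * (3 * a ^ 2 + 6 * b * a) * ip)
          ≤ |4 * τ * (3 * a ^ 2 + 6 * b * a)| * |ip| := habs
        _ ≤ (4 * τ * (3 * a ^ 2 + 6 * Cr * |a|)) * (Cr * ‖gv‖) := by
            apply mul_le_mul hc hip (abs_nonneg _)
            positivity
        _ = 12 * τ * Cr * (a ^ 2 * ‖gv‖) + 24 * τ * Cr ^ 2 * (|a| * ‖gv‖) := by ring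
    have : g x = ‖gv‖ := rfl
    rw [this]
    linarith [h1, h2]
  -- measurability facts
  have hgvm : Measurable (fun x => gradient v x) := by
    have : Measurable (fun x => fderiv ℝ v x) := measurable_fderiv ℝ v
    exact ((InnerProductSpace.toDual ℝ
      (EuclideanSpace ℝ (Fin d))).symm.continuous.measurable).comp this
  have hgm : AEStronglyMeasurable g μ :=
    (hgvm.norm.stronglyMeasurable).aestronglyMeasurable
  have hv2m : AEStronglyMeasurable (fun x => (v x) ^ 2) μ :=
    ((hv.continuous.pow 2).stronglyMeasurable).aestronglyMeasurable
  have hvam : AEStronglyMeasurable (fun x => |v x|) μ :=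
    (hv.continuous.abs.stronglyMeasurable).aestronglyMeasurable
  -- MemLp facts
  have hgL2 : MemLp g 2 μ := (memLp_two_iff_integrable_sq hgm).2 hI2
  have hv2L2 : MemLp (fun x => (v x) ^ 2) 2 μ := by
    refine (memLp_two_iff_integrable_sq hv2m).2 ?_
    have : (fun x => ((v x) ^ 2) ^ 2) = fun x => (v x) ^ 4 := by
      funext x; ring
    rw [this]; exact hI3
  have hvaL2 : MemLp (fun x => |v x|) 2 μ := by
    refine (memLp_two_iff_integrable_sq hvam).2 ?_
    have : (fun x => (|v x|) ^ 2) = fun x => (v x) ^ 2 := by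
      funext x; exact sq_abs _
    rw [this]; exact hI4
  have hpqr : (1 : ℝ≥0∞) / 1 = 1 / 2 + 1 / 2 := by
    rw [one_div, one_div, ENNReal.inv_two_add_inv_two, inv_one]
  -- integrability of the products
  have hP1 : Integrable (fun x => (v x) ^ 2 * g x) μ := by
    have := (hgL2.smul hv2L2 (r := 1) : MemLp ((fun x => (v x) ^ 2) • g) 1 μ)
    rw [memLp_one_iff_integrable] at this
    simpa [Pi.smul_apply', Pi.smul_apply, smul_eq_mul, Pi.mul_def] using this
  have hP2 : Integrable (fun x => |v x| * g x) μ := by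
    have := (hgL2.smul hvaL2 (r := 1) : MemLp ((fun x => |v x|) • g) 1 μ)
    rw [memLp_one_iff_integrable] at this
    simpa [Pi.smul_apply', Pi.smul_apply, smul_eq_mul, Pi.mul_def] using this
  -- Hölder (Cauchy-Schwarz) inequalities
  have hconj : Real.HolderConjugate 2 2 := Real.HolderConjugate.two_two
  have h2e : ENNReal.ofReal (2 : ℝ) = 2 := by
    simp [ENNReal.ofReal_ofNat]
  have hrpow : ∀ a : ℝ, a ^ (2 : ℝ) = a ^ 2 := by
    intro a
    rw [show (2 : ℝ) = ((2 : ℕ) : ℝ) by norm_num, Real.rpow_natCast]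
  have hCS1 : ∫ x, (v x) ^ 2 * g x ∂μ
      ≤ (∫ x, (v x) ^ 4 ∂μ) ^ ((1 : ℝ) / 2) * (∫ x, g x ^ 2 ∂μ) ^ ((1 : ℝ) / 2) := by
    have := integral_mul_le_Lp_mul_Lq_of_nonneg hconj
      (Filter.Eventually.of_forall fun x => sq_nonneg (v x))
      (Filter.Eventually.of_forall fun x => norm_nonneg _)
      (show MemLp (fun x => (v x) ^ 2) (ENNReal.ofReal 2) μ by rw [h2e]; exact hv2L2)
      (show MemLp g (ENNReal.ofReal 2) μ by rw [h2e]; exact hgL2)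
    have e1 : ∫ x, ((v x) ^ 2) ^ (2 : ℝ) ∂μ = ∫ x, (v x) ^ 4 ∂μ := by
      apply integral_congr_ae (Filter.Eventually.of_forall fun x => ?_)
      rw [hrpow]; ring
    have e2 : ∫ x, g x ^ (2 : ℝ) ∂μ = ∫ x, g x ^ 2 ∂μ := by
      apply integral_congr_ae (Filter.Eventually.of_forall fun x => ?_)
      rw [hrpow]
    rw [e1, e2] at this
    exact this
  have hCS2 : ∫ x, |v x| * g x ∂μ
      ≤ (∫ x, (v x) ^ 2 ∂μ) ^ ((1 : ℝ) / 2) * (∫ x, g x ^ 2 ∂μ) ^ ((1 : ℝ) / 2) := by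
    have := integral_mul_le_Lp_mul_Lq_of_nonneg hconj
      (Filter.Eventually.of_forall fun x => abs_nonneg (v x))
      (Filter.Eventually.of_forall fun x => norm_nonneg _)
      (show MemLp (fun x => |v x|) (ENNReal.ofReal 2) μ by rw [h2e]; exact hvaL2)
      (show MemLp g (ENNReal.ofReal 2) μ by rw [h2e]; exact hgL2)
    have e1 : ∫ x, (|v x|) ^ (2 : ℝ) ∂μ = ∫ x, (v x) ^ 2 ∂μ := by
      apply integral_congr_ae (Filter.Eventually.of_forall fun x => ?_)
      rw [hrpow, sq_abs]
    have e2 : ∫ x, g x ^ (2 : ℝ) ∂μ = ∫ x, g x ^ 2 ∂μ := by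
      apply integral_congr_ae (Filter.Eventually.of_forall fun x => ?_)
      rw [hrpow]
    rw [e1, e2] at this
    exact this
  -- main estimate
  have hA : Integrable (fun x => 4 * τ * g x ^ 2) μ := hI2.const_mul _
  have hB : Integrable (fun x => 12 * τ * Cr * ((v x) ^ 2 * g x)) μ := hP1.const_mul _
  have hC : Integrable (fun x => 24 * τ * Cr ^ 2 * (|v x| * g x)) μ := hP2.const_mul _
  have hAB : Integrable (fun x => 4 * τ * g x ^ 2 + 12 * τ * Cr * ((v x) ^ 2 * g x)) μ :=
    hA.add hB
  have hRHSint : Integrable (fun x => 4 * τ * g x ^ 2 + 12 * τ * Cr * ((v x) ^ 2 * g x)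
      + 24 * τ * Cr ^ 2 * (|v x| * g x)) μ := hAB.add hC
  have hmono : ∫ x, -(inner ℝ (gradient Nf x) (gradient v x) : ℝ) ∂μ
      ≤ ∫ x, (4 * τ * g x ^ 2 + 12 * τ * Cr * ((v x) ^ 2 * g x)
          + 24 * τ * Cr ^ 2 * (|v x| * g x)) ∂μ :=
    integral_mono hI1.neg hRHSint hpt
  have hsplit : ∫ x, (4 * τ * g x ^ 2 + 12 * τ * Cr * ((v x) ^ 2 * g x)
        + 24 * τ * Cr ^ 2 * (|v x| * g x)) ∂μ
      = 4 * τ * (∫ x, g x ^ 2 ∂μ) + 12 * τ * Cr * (∫ x, (v x) ^ 2 * g x ∂μ)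
        + 24 * τ * Cr ^ 2 * (∫ x, |v x| * g x ∂μ) := by
    rw [integral_add hAB hC, integral_add hA hB,
      integral_const_mul, integral_const_mul, integral_const_mul]
  have hc1 : (0 : ℝ) ≤ 12 * τ * Cr := by positivity
  have hc2 : (0 : ℝ) ≤ 24 * τ * Cr ^ 2 := by positivity
  have hfin1 : 12 * τ * Cr * (∫ x, (v x) ^ 2 * g x ∂μ)
      ≤ 12 * τ * Cr * ((∫ x, (v x) ^ 4 ∂μ) ^ ((1 : ℝ) / 2)
        * (∫ x, g x ^ 2 ∂μ) ^ ((1 : ℝ) / 2)) :=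
    mul_le_mul_of_nonneg_left hCS1 hc1
  have hfin2 : 24 * τ * Cr ^ 2 * (∫ x, |v x| * g x ∂μ)
      ≤ 24 * τ * Cr ^ 2 * ((∫ x, (v x) ^ 2 ∂μ) ^ ((1 : ℝ) / 2)
        * (∫ x, g x ^ 2 ∂μ) ^ ((1 : ℝ) / 2)) :=
    mul_le_mul_of_nonneg_left hCS2 hc2
  rw [← integral_neg]
  calc (∫ x, -(inner ℝ (gradient Nf x) (gradient v x) : ℝ) ∂μ)
      ≤ 4 * τ * (∫ x, g x ^ 2 ∂μ) + 12 * τ * Cr * (∫ x, (v x) ^ 2 * g x ∂μ)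
        + 24 * τ * Cr ^ 2 * (∫ x, |v x| * g x ∂μ) := by
        rw [← hsplit]; exact hmono
    _ ≤ 4 * τ * (∫ x, g x ^ 2 ∂μ)
        + 12 * τ * Cr * ((∫ x, (v x) ^ 4 ∂μ) ^ ((1 : ℝ) / 2)
            * (∫ x, g x ^ 2 ∂μ) ^ ((1 : ℝ) / 2))
        + 24 * τ * Cr ^ 2 * ((∫ x, (v x) ^ 2 ∂μ) ^ ((1 : ℝ) / 2)
            * (∫ x, g x ^ 2 ∂μ) ^ ((1 : ℝ) / 2)) := by
        linarith [hfin1, hfin2]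
    _ = 4 * τ * (∫ x, g x ^ 2 ∂μ)
        + 12 * τ * Cr * (∫ x, (v x) ^ 4 ∂μ) ^ ((1 : ℝ) / 2)
            * (∫ x, g x ^ 2 ∂μ) ^ ((1 : ℝ) / 2)
        + 24 * τ * Cr ^ 2 * (∫ x, (v x) ^ 2 ∂μ) ^ ((1 : ℝ) / 2)
            * (∫ x, g x ^ 2 ∂μ) ^ ((1 : ℝ) / 2) := by ring
end

section
/- Let a₂ ∈ L^∞(Ω), y_r ∈ L^∞(Ω), and let ḡ(w) = a₁w + a₂w(|w| − 1) with a₁, a₂ ≥ 0. Define N_g(d) = ḡ(y_r + d) − ḡ(y_r). Then −∫_Ω N_g(d)·d dx ≤ (‖a₂‖_{L^∞} + ‖a₂ y_r‖_{L^∞})·‖d‖²_{L²} for all d ∈ L²(Ω) (with the integrand interpreted pointwise). -/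
open MeasureTheory

lemma ptwise (a1 a2 y dd Ca Cay : ℝ) (h1 : 0 ≤ a1) (h2 : 0 ≤ a2)
    (hCa : |a2| ≤ Ca) (hCay : |a2 * y| ≤ Cay) :
    -(((a1 * (y + dd) + a2 * (y + dd) * (|y + dd| - 1)) -
      (a1 * y + a2 * y * (|y| - 1))) * dd) ≤ (Ca + Cay) * dd ^ 2 := by
  have e1 : a2 ≤ Ca := (le_abs_self _).trans hCa
  have hA : (0:ℝ) ≤ |y + dd| := abs_nonneg _
  have h3 : |(|y + dd| - |y|)| ≤ |dd| := by
    simpa using abs_abs_sub_abs_le_abs_sub (y + dd) y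
  have ht : |a2 * y * ((|y + dd| - |y|) * dd)| ≤ Cay * dd ^ 2 := by
    rw [abs_mul (a2 * y) _, abs_mul (|y + dd| - |y|) dd]
    calc |a2 * y| * (|(|y + dd| - |y|)| * |dd|) ≤ Cay * (|dd| * |dd|) :=
          mul_le_mul hCay (mul_le_mul_of_nonneg_right h3 (abs_nonneg _))
            (by positivity) ((abs_nonneg _).trans hCay)
      _ = Cay * dd ^ 2 := by rw [← abs_mul, abs_mul_self, sq]
  have ht2 : -(a2 * y * ((|y + dd| - |y|) * dd)) ≤ Cay * dd ^ 2 := (neg_le_abs _).trans ht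
  nlinarith [mul_nonneg h1 (sq_nonneg dd), mul_nonneg (mul_nonneg h2 hA) (sq_nonneg dd),
    mul_le_mul_of_nonneg_right e1 (sq_nonneg dd), ht2]

theorem stmt9 (d : ℕ) (Ω : Set (EuclideanSpace ℝ (Fin d))) (hΩ : MeasurableSet Ω)
    (a₁ a₂ yr dfun : EuclideanSpace ℝ (Fin d) → ℝ)
    (Ca Cay : ℝ)
    (ha₁ : ∀ x, 0 ≤ a₁ x) (ha₂ : ∀ x, 0 ≤ a₂ x)
    (hCa : ∀ x, |a₂ x| ≤ Ca) (hCay : ∀ x, |a₂ x * yr x| ≤ Cay)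
    (g : EuclideanSpace ℝ (Fin d) → ℝ → ℝ)
    (hg : ∀ x (s : ℝ), g x s = a₁ x * s + a₂ x * s * (|s| - 1))
    (Ng : EuclideanSpace ℝ (Fin d) → ℝ)
    (hNg : ∀ x, Ng x = g x (yr x + dfun x) - g x (yr x))
    (hint1 : IntegrableOn (fun x => Ng x * dfun x) Ω)
    (hint2 : IntegrableOn (fun x => (dfun x) ^ 2) Ω) :
    (-∫ x in Ω, Ng x * dfun x) ≤ (Ca + Cay) * ∫ x in Ω, (dfun x) ^ 2 := by
  have key : ∀ x, -(Ng x * dfun x) ≤ (Ca + Cay) * (dfun x) ^ 2 := by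
    intro x
    rw [hNg x, hg, hg]
    exact ptwise (a₁ x) (a₂ x) (yr x) (dfun x) Ca Cay (ha₁ x) (ha₂ x) (hCa x) (hCay x)
  calc -∫ x in Ω, Ng x * dfun x = ∫ x in Ω, -(Ng x * dfun x) := by
        rw [integral_neg]
    _ ≤ ∫ x in Ω, (Ca + Cay) * (dfun x) ^ 2 :=
        integral_mono hint1.neg (hint2.const_mul _) (fun x => key x)
    _ = (Ca + Cay) * ∫ x in Ω, (dfun x) ^ 2 := integral_const_mul _ _
end
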